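/- Let c > 0, b > 0 and let r, m be real numbers with 0 < m < r and r > 1. Let f₀ > (b/c)^{1/(r-m)}. Then there is no differentiable function f : [0,∞) → ℝ with f(0) = f₀, f(t) > 0 for all t ≥ 0, and f'(t) = c·f(t)^r − b·f(t)^m for all t ≥ 0; that is, every such solution blows up in finite time. -/

import Mathlib

open Set Real

private lemma stmt4_key {c b r m L : ℝ} (hb : 0 < b)
    (hmr : m < r) (hL : 0 < L) :
    ∀ x : ℝ, L ≤ x → (c - b * L ^ (m - r)) * x ^ r ≤ c * x ^ r - b * x ^ m := by
  intro x hx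
  have hx0 : 0 < x := lt_of_lt_of_le hL hx
  have h1 : x ^ m = x ^ (m - r) * x ^ r := by
    rw [← Real.rpow_add hx0]; ring_nf
  have h2 : x ^ (m - r) ≤ L ^ (m - r) :=
    Real.rpow_le_rpow_of_nonpos hL hx (by linarith)
  have h3 : (0:ℝ) < x ^ r := Real.rpow_pos_of_pos hx0 r
  nlinarith [mul_le_mul_of_nonneg_right h2 h3.le]

/-- Blow-up of the ODE subsolution (Theorem 4.1, first case): for `c, b > 0`,
`0 < m < r`, `r > 1` and `f₀ > (b/c)^(1/(r-m))`, there is no function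
`f : [0,∞) → ℝ` with `f(0) = f₀`, `f > 0` on `[0,∞)`, solving
`f' = c·f^r − b·f^m` on `[0,∞)`. -/
theorem stmt_4 (c b r m f₀ : ℝ) (hc : 0 < c) (hb : 0 < b)
    (hm : 0 < m) (hmr : m < r) (hr : 1 < r)
    (hf₀ : (b / c) ^ (1 / (r - m)) < f₀) :
    ¬ ∃ f : ℝ → ℝ,
        f 0 = f₀ ∧
        (∀ t : ℝ, 0 ≤ t → 0 < f t) ∧
        (∀ t : ℝ, 0 ≤ t →
          HasDerivWithinAt f (c * f t ^ r - b * f t ^ m) (Set.Ici 0) t) := by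
  rintro ⟨f, hf0, hfpos, hderiv⟩
  have hrm : (0:ℝ) < r - m := by linarith
  set K : ℝ := (b / c) ^ (1 / (r - m)) with hKdef
  have hbc : (0:ℝ) < b / c := div_pos hb hc
  have hK : 0 < K := Real.rpow_pos_of_pos hbc _
  set L : ℝ := (K + f₀) / 2 with hLdef
  have hKL : K < L := by rw [hLdef]; linarith
  have hLf₀ : L < f₀ := by rw [hLdef]; linarith
  have hL : 0 < L := lt_trans hK hKL
  have hKrm : K ^ (r - m) = b / c := by
    rw [hKdef, ← Real.rpow_mul hbc.le, one_div, inv_mul_cancel₀ (ne_of_gt hrm),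
      Real.rpow_one]
  have hLrm : b / c < L ^ (r - m) := by
    rw [← hKrm]; exact Real.rpow_lt_rpow hK.le hKL hrm
  set δ₀ : ℝ := c - b * L ^ (m - r) with hδ₀def
  have hPL : (0:ℝ) < L ^ (r - m) := Real.rpow_pos_of_pos hL _
  have hδ₀ : 0 < δ₀ := by
    have hneg : L ^ (m - r) = (L ^ (r - m))⁻¹ := by
      rw [show m - r = -(r - m) by ring, Real.rpow_neg hL.le]
    have hb' : b < c * L ^ (r - m) := by
      rw [div_lt_iff₀ hc] at hLrm; linarith
    rw [hδ₀def, hneg, sub_pos, mul_inv_lt_iff₀ hPL]; linarith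
  -- continuity of f on [0, ∞)
  have hcont : ContinuousOn f (Ici 0) := fun t ht =>
    (hderiv t ht).differentiableWithinAt.continuousWithinAt
  -- Step A : L < f t for all t ≥ 0
  have hA : ∀ t : ℝ, 0 ≤ t → L < f t := by
    by_contra hcon
    push_neg at hcon
    obtain ⟨t₀, ht₀, hft₀⟩ := hcon
    set S : Set ℝ := Ici 0 ∩ f ⁻¹' (Iic L) with hSdef
    have hSne : S.Nonempty := ⟨t₀, ht₀, hft₀⟩
    have hSclosed : IsClosed S :=
      hcont.preimage_isClosed_of_isClosed isClosed_Ici isClosed_Iic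
    have hSbdd : BddBelow S := ⟨0, fun t ht => ht.1⟩
    set t₁ : ℝ := sInf S with ht₁def
    have ht₁S : t₁ ∈ S := hSclosed.csInf_mem hSne hSbdd
    have ht₁0 : 0 ≤ t₁ := ht₁S.1
    have hft₁ : f t₁ ≤ L := ht₁S.2
    have hbefore : ∀ t : ℝ, 0 ≤ t → t < t₁ → L < f t := by
      intro t ht htlt
      by_contra hle
      push_neg at hle
      exact absurd (csInf_le hSbdd ⟨ht, hle⟩) (not_le.mpr htlt)
    have hmono : MonotoneOn f (Icc 0 t₁) := by
      apply monotoneOn_of_deriv_nonneg (convex_Icc 0 t₁)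
        (hcont.mono (Icc_subset_Ici_self))
      · intro x hx
        rw [interior_Icc] at hx
        exact ((hderiv x hx.1.le).hasDerivAt
          (Ici_mem_nhds hx.1)).differentiableAt.differentiableWithinAt
      · intro x hx
        rw [interior_Icc] at hx
        have hd := (hderiv x hx.1.le).hasDerivAt (Ici_mem_nhds hx.1)
        rw [hd.deriv]
        have hLx : L ≤ f x := (hbefore x hx.1.le hx.2).le
        have := stmt4_key (c := c) hb hmr hL (f x) hLx
        have hxr : (0:ℝ) < f x ^ r :=
          Real.rpow_pos_of_pos (hfpos x hx.1.le) r
        nlinarith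
    have : f 0 ≤ f t₁ :=
      hmono ⟨le_refl 0, ht₁0⟩ ⟨ht₁0, le_refl t₁⟩ ht₁0
    rw [hf0] at this
    linarith
  -- Step B : the auxiliary function h := f ^ (1 - r)
  set δ : ℝ := (r - 1) * δ₀ with hδdef
  have hδ : 0 < δ := mul_pos (by linarith) hδ₀
  set h : ℝ → ℝ := fun t => f t ^ (1 - r) with hhdef
  have hhpos : ∀ t : ℝ, 0 ≤ t → 0 < h t := fun t ht =>
    Real.rpow_pos_of_pos (hfpos t ht) _
  have hderivh : ∀ t : ℝ, 0 ≤ t →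
      HasDerivWithinAt h
        ((c * f t ^ r - b * f t ^ m) * (1 - r) * f t ^ (1 - r - 1)) (Ici 0) t :=
    fun t ht => (hderiv t ht).rpow_const (Or.inl (ne_of_gt (hfpos t ht)))
  have hbound : ∀ t : ℝ, 0 ≤ t →
      (c * f t ^ r - b * f t ^ m) * (1 - r) * f t ^ (1 - r - 1) ≤ -δ := by
    intro t ht
    have hf0' : 0 < f t := hfpos t ht
    have hPr : (0:ℝ) < f t ^ r := Real.rpow_pos_of_pos hf0' r
    have hinv : f t ^ (1 - r - 1) = (f t ^ r)⁻¹ := by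
      rw [show (1:ℝ) - r - 1 = -r by ring, Real.rpow_neg hf0'.le]
    have hA' : δ₀ * f t ^ r ≤ c * f t ^ r - b * f t ^ m :=
      stmt4_key hb hmr hL (f t) (hA t ht).le
    rw [hinv]
    have hinvpos : (0:ℝ) < (f t ^ r)⁻¹ := inv_pos.mpr hPr
    have hcancel : f t ^ r * (f t ^ r)⁻¹ = 1 := mul_inv_cancel₀ (ne_of_gt hPr)
    have h1 : (c * f t ^ r - b * f t ^ m) * (r - 1) * (f t ^ r)⁻¹ ≥
        δ₀ * f t ^ r * (r - 1) * (f t ^ r)⁻¹ := by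
      have := mul_le_mul_of_nonneg_right
        (mul_le_mul_of_nonneg_right hA' (by linarith : (0:ℝ) ≤ r - 1))
        hinvpos.le
      linarith
    have h2 : δ₀ * f t ^ r * (r - 1) * (f t ^ r)⁻¹ = δ := by
      rw [hδdef]; field_simp
    nlinarith
  -- Step C : contradiction via linear decay of h
  set T : ℝ := (h 0 + 1) / δ with hTdef
  have hT : 0 < T := div_pos (by linarith [hhpos 0 le_rfl]) hδ
  set φ : ℝ → ℝ := fun t => h t + δ * t with hφdef
  have hφanti : AntitoneOn φ (Icc 0 T) := by
    apply antitoneOn_of_deriv_nonpos (convex_Icc 0 T)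
    · apply ContinuousOn.add
      · have : ContinuousOn h (Ici 0) :=
          fun t ht => (hderivh t ht).differentiableWithinAt.continuousWithinAt
        exact this.mono Icc_subset_Ici_self
      · exact (continuous_const.mul continuous_id).continuousOn
    · intro x hx
      rw [interior_Icc] at hx
      have hd := ((hderivh x hx.1.le).hasDerivAt (Ici_mem_nhds hx.1)).add
        ((hasDerivAt_id x).const_mul δ)
      simp only [id_eq] at hd
      exact hd.differentiableAt.differentiableWithinAt
    · intro x hx
      rw [interior_Icc] at hx
      have hd := ((hderivh x hx.1.le).hasDerivAt (Ici_mem_nhds hx.1)).add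
        ((hasDerivAt_id x).const_mul δ)
      simp only [id_eq] at hd
      rw [hφdef, show (fun t => h t + δ * t) = (h + fun y => δ * y) from rfl, hd.deriv]
      have := hbound x hx.1.le
      simp only [mul_one]
      linarith
  have hφT : φ T ≤ φ 0 := hφanti ⟨le_refl 0, hT.le⟩ ⟨hT.le, le_refl T⟩ hT.le
  have hδT : δ * T = h 0 + 1 := by
    rw [hTdef, mul_div_cancel₀ _ (ne_of_gt hδ)]
  have : h T ≤ -1 := by
    have : h T + δ * T ≤ h 0 + δ * 0 := hφT
    rw [hδT] at this; linarith
  linarith [hhpos T hT.le]
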